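/- arXiv:0804.4030 — 4 statements merged into one kernel-verified Lean document; each statement's English description precedes it below -/
import Mathlib

section
/- For points $x_i, x_j \in \mathbb{R}^N$ with $x_i \neq x_j$, exponents $\alpha, \beta \geq 1$, and any constant $0 < \sigma \leq \min(\alpha, \beta)$, there exists a constant $C > 0$ (depending only on $\alpha, \beta, \sigma$) such that for all $y \in \mathbb{R}^N$: $\frac{1}{(1+|y-x_j|)^{\alpha}(1+|y-x_i|)^{\beta}} \leq \frac{C}{|x_i-x_j|^{\sigma}}\left(\frac{1}{(1+|y-x_i|)^{\alpha+\beta-\sigma}} + \frac{1}{(1+|y-x_j|)^{\alpha+\beta-\sigma}}\right)$. -/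
open Real

theorem stmt_0 (N : ℕ) (hN : 1 ≤ N)
    (xi xj : EuclideanSpace ℝ (Fin N)) (hne : xi ≠ xj)
    (α β σ : ℝ) (hα : 1 ≤ α) (hβ : 1 ≤ β)
    (hσ0 : 0 < σ) (hσ : σ ≤ min α β) :
    ∃ C > 0, ∀ y : EuclideanSpace ℝ (Fin N),
      1 / ((1 + ‖y - xj‖) ^ α * (1 + ‖y - xi‖) ^ β) ≤
        C / ‖xi - xj‖ ^ σ *
          (1 / (1 + ‖y - xi‖) ^ (α + β - σ) + 1 / (1 + ‖y - xj‖) ^ (α + β - σ)) := by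
  have hd : 0 < ‖xi - xj‖ := by
    simpa [sub_eq_zero] using hne
  set d := ‖xi - xj‖ with hdd
  have hσα : σ ≤ α := hσ.trans (min_le_left _ _)
  have hσβ : σ ≤ β := hσ.trans (min_le_right _ _)
  refine ⟨2 ^ σ, by positivity, fun y => ?_⟩
  set a := 1 + ‖y - xi‖ with haa
  set b := 1 + ‖y - xj‖ with hbb
  have ha0 : (0:ℝ) < a := by positivity
  have hb0 : (0:ℝ) < b := by positivity
  set p := α + β - σ with hpp
  have htri : d ≤ (a - 1) + (b - 1) := by
    have : xi - xj = (y - xj) - (y - xi) := by abel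
    rw [hdd, this, haa, hbb]
    simpa [add_comm] using norm_sub_le (y - xj) (y - xi)
  have h2σ : (0:ℝ) < (2:ℝ) ^ σ := by positivity
  have hdσ : (0:ℝ) < d ^ σ := by positivity
  have haux : ∀ x : ℝ, 0 < x →
      1 / ((d / 2) ^ σ * x ^ p) = 2 ^ σ / d ^ σ * (1 / x ^ p) := by
    intro x hx
    have hxp : (0:ℝ) < x ^ p := by positivity
    rw [Real.div_rpow hd.le (by norm_num)]
    field_simp
  rcases le_total a b with hab | hab
  · -- b is the large one; d/2 ≤ b
    have hdb : d / 2 ≤ b := by nlinarith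
    have key : (d / 2) ^ σ * a ^ p ≤ b ^ α * a ^ β := by
      have h1 : (d / 2) ^ σ ≤ b ^ σ := Real.rpow_le_rpow (by positivity) hdb hσ0.le
      have h2 : a ^ (α - σ) ≤ b ^ (α - σ) :=
        Real.rpow_le_rpow ha0.le hab (by linarith)
      have hb' : b ^ α = b ^ σ * b ^ (α - σ) := by
        rw [← Real.rpow_add hb0]; ring_nf
      have ha' : a ^ (α - σ) * a ^ β = a ^ p := by
        rw [← Real.rpow_add ha0, hpp]; ring_nf
      calc (d / 2) ^ σ * a ^ p = (d / 2) ^ σ * (a ^ (α - σ) * a ^ β) := by rw [ha']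
        _ ≤ b ^ σ * (b ^ (α - σ) * a ^ β) := by
            have hβpos : (0:ℝ) < a ^ β := by positivity
            have h3 : a ^ (α - σ) * a ^ β ≤ b ^ (α - σ) * a ^ β :=
              mul_le_mul_of_nonneg_right h2 hβpos.le
            exact mul_le_mul h1 h3 (by positivity) (by positivity)
        _ = b ^ α * a ^ β := by rw [hb']; ring
    calc 1 / (b ^ α * a ^ β) ≤ 1 / ((d / 2) ^ σ * a ^ p) :=
          one_div_le_one_div_of_le (by positivity) key
      _ = 2 ^ σ / d ^ σ * (1 / a ^ p) := haux a ha0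
      _ ≤ 2 ^ σ / d ^ σ * (1 / a ^ p + 1 / b ^ p) := by
          have : (0:ℝ) ≤ 1 / b ^ p := by positivity
          nlinarith [div_pos h2σ hdσ]
  · -- a is the large one; d/2 ≤ a
    have hda : d / 2 ≤ a := by nlinarith
    have key : (d / 2) ^ σ * b ^ p ≤ b ^ α * a ^ β := by
      have h1 : (d / 2) ^ σ ≤ a ^ σ := Real.rpow_le_rpow (by positivity) hda hσ0.le
      have h2 : b ^ (β - σ) ≤ a ^ (β - σ) :=
        Real.rpow_le_rpow hb0.le hab (by linarith)
      have ha' : a ^ β = a ^ σ * a ^ (β - σ) := by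
        rw [← Real.rpow_add ha0]; ring_nf
      have hb' : b ^ α * b ^ (β - σ) = b ^ p := by
        rw [← Real.rpow_add hb0, hpp]; ring_nf
      calc (d / 2) ^ σ * b ^ p = (d / 2) ^ σ * (b ^ α * b ^ (β - σ)) := by rw [hb']
        _ ≤ a ^ σ * (b ^ α * a ^ (β - σ)) := by
            have h3 : b ^ α * b ^ (β - σ) ≤ b ^ α * a ^ (β - σ) :=
              mul_le_mul_of_nonneg_left h2 (by positivity)
            exact mul_le_mul h1 h3 (by positivity) (by positivity)
        _ = b ^ α * a ^ β := by rw [ha']; ring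
    calc 1 / (b ^ α * a ^ β) ≤ 1 / ((d / 2) ^ σ * b ^ p) :=
          one_div_le_one_div_of_le (by positivity) key
      _ = 2 ^ σ / d ^ σ * (1 / b ^ p) := haux b hb0
      _ ≤ 2 ^ σ / d ^ σ * (1 / a ^ p + 1 / b ^ p) := by
          have : (0:ℝ) ≤ 1 / a ^ p := by positivity
          nlinarith [div_pos h2σ hdσ]
end

section
/- For any constant $0 < \sigma < N-2$ there is a constant $C > 0$ such that for all $y \in \mathbb{R}^N$: $\int_{\mathbb{R}^N} \frac{1}{|y-z|^{N-2}} \cdot \frac{1}{(1+|z|)^{2+\sigma}}\,dz \leq \frac{C}{(1+|y|)^{\sigma}}$. -/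
open Real MeasureTheory Set Metric
open scoped ENNReal

namespace RieszAux

variable {E' : Type*} [NormedAddCommGroup E'] [NormedSpace ℝ E'] [MeasurableSpace E']
  [BorelSpace E'] [FiniteDimensional ℝ E'] [Nontrivial E']

open Module in
theorem lintegral_fun_norm_addHaar' (μ : Measure E') [μ.IsAddHaarMeasure] (g : ℝ → ℝ≥0∞)
    (hg : Measurable g) :
    ∫⁻ x, g ‖x‖ ∂μ = μ.toSphere univ *
      ∫⁻ r in Ioi (0:ℝ), ENNReal.ofReal (r ^ (finrank ℝ E' - 1)) * g r := by
  have h1 : ∫⁻ x, g ‖x‖ ∂μ = ∫⁻ x : ({(0:E')}ᶜ : Set E'), g ‖x.1‖ ∂(μ.comap (↑)) := by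
    rw [lintegral_subtype_comap (measurableSet_singleton _).compl fun x ↦ g ‖x‖,
      MeasureTheory.restrict_compl_singleton]
  have h2 := (μ.measurePreserving_homeomorphUnitSphereProd).lintegral_comp_emb
    (Homeomorph.measurableEmbedding _)
    (fun p : sphere (0:E') 1 × Ioi (0:ℝ) ↦ g p.2)
  have h2' : ∫⁻ x : ({(0:E')}ᶜ : Set E'), g ‖x.1‖ ∂(μ.comap (↑)) =
      ∫⁻ p : sphere (0:E') 1 × Ioi (0:ℝ), g p.2
        ∂(μ.toSphere.prod (Measure.volumeIoiPow (finrank ℝ E' - 1))) := by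
    convert h2 using 3 with x
    simp [homeomorphUnitSphereProd]
  rw [h1, h2']
  have h4 : ∫⁻ p : sphere (0:E') 1 × Ioi (0:ℝ), g p.2
      ∂(μ.toSphere.prod (Measure.volumeIoiPow (finrank ℝ E' - 1))) =
      μ.toSphere univ * ∫⁻ r : Ioi (0:ℝ), g r ∂(Measure.volumeIoiPow (finrank ℝ E' - 1)) := by
    have hmp : AEMeasurable (fun p : sphere (0:E') 1 × Ioi (0:ℝ) ↦ g p.2)
        (μ.toSphere.prod (Measure.volumeIoiPow (finrank ℝ E' - 1))) :=
      ((hg.comp measurable_subtype_coe).comp measurable_snd).aemeasurable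
    rw [lintegral_prod _ hmp]
    simp [lintegral_const, mul_comm]
  rw [h4]
  congr 1
  have hf2 : Measurable fun r : Ioi (0:ℝ) ↦ ENNReal.ofReal (r.1 ^ (finrank ℝ E' - 1)) :=
    (measurable_subtype_coe.pow_const _).ennreal_ofReal
  have hg2 : Measurable fun r : Ioi (0:ℝ) ↦ g r.1 := hg.comp measurable_subtype_coe
  rw [Measure.volumeIoiPow, lintegral_withDensity_eq_lintegral_mul _ hf2 hg2]
  rw [show ((fun r : Ioi (0:ℝ) ↦ ENNReal.ofReal (r.1 ^ (finrank ℝ E' - 1))) *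
        fun r : Ioi (0:ℝ) ↦ g r.1)
      = fun r : Ioi (0:ℝ) ↦ (fun s : ℝ ↦ ENNReal.ofReal (s ^ (finrank ℝ E' - 1)) * g s) r.1
      from rfl,
    lintegral_subtype_comap measurableSet_Ioi]

noncomputable def kap (N : ℕ) : ℝ≥0∞ :=
  (volume : Measure (EuclideanSpace ℝ (Fin N))).toSphere Set.univ

section Euclid

variable {N : ℕ} (hN : 3 ≤ N)

include hN

lemma nontriv : Nontrivial (EuclideanSpace ℝ (Fin N)) := by
  haveI : Nonempty (Fin N) := Fin.pos_iff_nonempty.mp (by omega)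
  infer_instance

lemma keyE (g : ℝ → ℝ≥0∞) (hg : Measurable g) :
    ∫⁻ x : EuclideanSpace ℝ (Fin N), g ‖x‖ = kap N *
      ∫⁻ r in Ioi (0:ℝ), ENNReal.ofReal (r ^ (N - 1)) * g r := by
  haveI := nontriv hN
  rw [lintegral_fun_norm_addHaar' (volume : Measure (EuclideanSpace ℝ (Fin N))) g hg,
    finrank_euclideanSpace_fin]
  rfl

lemma kappa_ne_top : kap N ≠ ⊤ := by
  haveI := nontriv hN
  exact measure_ne_top _ _

lemma keyE_set (s : Set ℝ) (hs : MeasurableSet s) (h : ℝ → ℝ≥0∞) (hh : Measurable h)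
    (A : Set (EuclideanSpace ℝ (Fin N))) (hA : MeasurableSet A)
    (hAs : ∀ z : EuclideanSpace ℝ (Fin N), z ∈ A ↔ ‖z‖ ∈ s) :
    ∫⁻ z in A, h ‖z‖ = kap N *
      ∫⁻ r in s ∩ Ioi (0:ℝ), ENNReal.ofReal (r ^ (N - 1)) * h r := by
  set g : ℝ → ℝ≥0∞ := s.indicator h with hgdef
  have hg : Measurable g := hh.indicator hs
  have h1 : ∫⁻ z in A, h ‖z‖ = ∫⁻ z : EuclideanSpace ℝ (Fin N), g ‖z‖ := by
    rw [← lintegral_indicator hA]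
    congr 1
    funext z
    by_cases hz : z ∈ A
    · rw [indicator_of_mem hz, hgdef, indicator_of_mem ((hAs z).mp hz)]
    · rw [indicator_of_notMem hz, hgdef,
        indicator_of_notMem (fun hc ↦ hz ((hAs z).mpr hc))]
  rw [h1, keyE hN g hg]
  congr 1
  have h3 : ∀ r : ℝ, ENNReal.ofReal (r ^ (N - 1)) * g r =
      s.indicator (fun r ↦ ENNReal.ofReal (r ^ (N - 1)) * h r) r := by
    intro r
    by_cases hr : r ∈ s
    · rw [hgdef, indicator_of_mem hr, indicator_of_mem hr]
    · rw [hgdef, indicator_of_notMem hr, indicator_of_notMem hr, mul_zero]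
  simp_rw [h3]
  rw [lintegral_indicator hs, Measure.restrict_restrict hs]

lemma ball_est (c : EuclideanSpace ℝ (Fin N)) (R : ℝ) (hR : 0 ≤ R) :
    ∫⁻ z in ball c R, ENNReal.ofReal (1 / ‖c - z‖ ^ ((N:ℝ) - 2)) ≤
      kap N * ENNReal.ofReal (R * R) := by
  have hmeas : Measurable fun r : ℝ ↦ ENNReal.ofReal (1 / r ^ ((N:ℝ) - 2)) := by
    apply Measurable.ennreal_ofReal
    exact Measurable.const_div (measurable_id.pow measurable_const) 1
  have h1 : ∫⁻ z in ball c R, ENNReal.ofReal (1 / ‖c - z‖ ^ ((N:ℝ) - 2)) =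
      ∫⁻ z in ball (0:EuclideanSpace ℝ (Fin N)) R, ENNReal.ofReal (1 / ‖z‖ ^ ((N:ℝ) - 2)) := by
    rw [← lintegral_indicator measurableSet_ball, ← lintegral_indicator measurableSet_ball]
    have h2 : ∀ z : EuclideanSpace ℝ (Fin N), (ball c R).indicator
        (fun z ↦ ENNReal.ofReal (1 / ‖c - z‖ ^ ((N:ℝ) - 2))) z =
        (ball (0:EuclideanSpace ℝ (Fin N)) R).indicator
          (fun z ↦ ENNReal.ofReal (1 / ‖z‖ ^ ((N:ℝ) - 2))) (z - c) := by
      intro z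
      have hmem : z ∈ ball c R ↔ z - c ∈ ball (0:EuclideanSpace ℝ (Fin N)) R := by
        simp [mem_ball, dist_eq_norm]
      by_cases hz : z ∈ ball c R
      · rw [indicator_of_mem hz, indicator_of_mem (hmem.mp hz), norm_sub_rev]
      · rw [indicator_of_notMem hz, indicator_of_notMem (fun hc2 ↦ hz (hmem.mpr hc2))]
    simp_rw [h2]
    exact lintegral_sub_right_eq_self _ c
  rw [h1, keyE_set hN (Iio R) measurableSet_Iio _ hmeas _ measurableSet_ball
    (fun z ↦ mem_ball_zero_iff)]
  gcongr
  rw [Set.Iio_inter_Ioi]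
  have h4 : ∀ r ∈ Ioo (0:ℝ) R, ENNReal.ofReal (r ^ (N - 1)) *
      ENNReal.ofReal (1 / r ^ ((N:ℝ) - 2)) ≤ ENNReal.ofReal R := by
    intro r hr
    rw [← ENNReal.ofReal_mul (pow_nonneg hr.1.le _)]
    apply ENNReal.ofReal_le_ofReal
    have hr0 : (0:ℝ) < r := hr.1
    have heq : (r : ℝ) ^ (N - 1) * (1 / r ^ ((N:ℝ) - 2)) = r := by
      rw [← Real.rpow_natCast r (N - 1), one_div, ← Real.rpow_neg hr0.le,
        ← Real.rpow_add hr0]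
      have hc : ((N - 1 : ℕ) : ℝ) + -((N:ℝ) - 2) = 1 := by
        have h5 : (1:ℕ) ≤ N := by omega
        push_cast [Nat.cast_sub h5]
        ring
      rw [hc, Real.rpow_one]
    rw [heq]
    exact hr.2.le
  calc ∫⁻ r in Ioo 0 R, ENNReal.ofReal (r ^ (N - 1)) * ENNReal.ofReal (1 / r ^ ((N:ℝ) - 2))
      ≤ ∫⁻ _ in Ioo (0:ℝ) R, ENNReal.ofReal R := setLIntegral_mono' measurableSet_Ioo h4
    _ = ENNReal.ofReal R * volume (Ioo (0:ℝ) R) := setLIntegral_const _ _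
    _ ≤ ENNReal.ofReal (R * R) := by
        rw [Real.volume_Ioo, ENNReal.ofReal_mul hR]
        simp

lemma mid_est (σ : ℝ) (hσ : σ < (N:ℝ) - 2) (R : ℝ) (hR : 0 ≤ R) :
    ∫⁻ z in ball (0:EuclideanSpace ℝ (Fin N)) R, ENNReal.ofReal (1 / (1 + ‖z‖) ^ (2 + σ)) ≤
      kap N * ENNReal.ofReal ((1 + R) ^ ((N:ℝ) - 2 - σ) / ((N:ℝ) - 2 - σ)) := by
  set e : ℝ := (N:ℝ) - 3 - σ with hedef
  have hN3 : (3:ℝ) ≤ (N:ℝ) := by exact_mod_cast hN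
  have he : -1 < e := by simp only [hedef]; linarith
  have he1 : e + 1 = (N:ℝ) - 2 - σ := by simp only [hedef]; ring
  have he1pos : 0 < e + 1 := by rw [he1]; linarith
  have hmeas : Measurable fun r : ℝ ↦ ENNReal.ofReal (1 / (1 + r) ^ (2 + σ)) := by
    apply Measurable.ennreal_ofReal
    apply Measurable.const_div
    exact (measurable_const.add measurable_id).pow measurable_const
  rw [keyE_set hN (Iio R) measurableSet_Iio _ hmeas _ measurableSet_ball
    (fun z ↦ mem_ball_zero_iff)]
  gcongr
  rw [Set.Iio_inter_Ioi]
  have step1 : ∀ r ∈ Ioo (0:ℝ) R, ENNReal.ofReal (r ^ (N - 1)) *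
      ENNReal.ofReal (1 / (1 + r) ^ (2 + σ)) ≤ ENNReal.ofReal ((1 + r) ^ e) := by
    intro r hr
    have hr0 : (0:ℝ) < r := hr.1
    have h1r : (0:ℝ) < 1 + r := by linarith
    rw [← ENNReal.ofReal_mul (pow_nonneg hr0.le _)]
    apply ENNReal.ofReal_le_ofReal
    calc r ^ (N - 1) * (1 / (1 + r) ^ (2 + σ))
        ≤ (1 + r) ^ (N - 1) * (1 / (1 + r) ^ (2 + σ)) :=
          mul_le_mul_of_nonneg_right (pow_le_pow_left₀ hr0.le (by linarith) _) (by positivity)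
      _ = (1 + r) ^ e := by
          rw [← Real.rpow_natCast (1 + r) (N - 1), one_div, ← Real.rpow_neg h1r.le,
            ← Real.rpow_add h1r]
          congr 1
          have hc : ((N - 1 : ℕ) : ℝ) = (N:ℝ) - 1 := by
            have h5 : (1:ℕ) ≤ N := by omega
            push_cast [Nat.cast_sub h5]; ring
          rw [hc, hedef]; ring
  have hint : IntegrableOn (fun r : ℝ ↦ (1 + r) ^ e) (Ioo 0 R) := by
    apply IntegrableOn.mono_set _ Ioo_subset_Icc_self
    apply ContinuousOn.integrableOn_Icc
    apply ContinuousOn.rpow_const (continuousOn_const.add continuousOn_id)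
    intro x hx
    left
    have hx0 : (0:ℝ) ≤ x := hx.1
    intro hc; simp only [Pi.add_apply, id_eq] at hc; linarith
  have step2 : ∫⁻ r in Ioo (0:ℝ) R, ENNReal.ofReal ((1 + r) ^ e) =
      ENNReal.ofReal (∫ r in Ioo (0:ℝ) R, (1 + r) ^ e) := by
    rw [ofReal_integral_eq_lintegral_ofReal hint]
    filter_upwards [ae_restrict_mem measurableSet_Ioo] with r hr
    have : (0:ℝ) < 1 + r := by linarith [hr.1]
    positivity
  have step3 : ∫ r in Ioo (0:ℝ) R, (1 + r) ^ e ≤ (1 + R) ^ (e + 1) / (e + 1) := by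
    have hIoc : ∫ r in Ioo (0:ℝ) R, (1 + r) ^ e = ∫ r in (0:ℝ)..R, (1 + r) ^ e := by
      rw [intervalIntegral.integral_of_le hR, integral_Ioc_eq_integral_Ioo]
    rw [hIoc]
    have hcomp : ∫ r in (0:ℝ)..R, (1 + r) ^ e = ∫ x in (1:ℝ)..(1 + R), x ^ e := by
      have := intervalIntegral.integral_comp_add_left (a := (0:ℝ)) (b := R)
        (fun x : ℝ ↦ x ^ e) 1
      simpa using this
    rw [hcomp, integral_rpow (Or.inl he), Real.one_rpow]
    exact (div_le_div_iff_of_pos_right he1pos).mpr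
      (by linarith [Real.rpow_nonneg (by linarith : (0:ℝ) ≤ 1 + R) (e+1)])
  calc ∫⁻ r in Ioo (0:ℝ) R, ENNReal.ofReal (r ^ (N - 1)) * ENNReal.ofReal (1 / (1 + r) ^ (2 + σ))
      ≤ ∫⁻ r in Ioo (0:ℝ) R, ENNReal.ofReal ((1 + r) ^ e) :=
        setLIntegral_mono' measurableSet_Ioo step1
    _ = ENNReal.ofReal (∫ r in Ioo (0:ℝ) R, (1 + r) ^ e) := step2
    _ ≤ ENNReal.ofReal ((1 + R) ^ ((N:ℝ) - 2 - σ) / ((N:ℝ) - 2 - σ)) := by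
        rw [← he1]
        exact ENNReal.ofReal_le_ofReal step3

lemma tail_est (σ : ℝ) (hσ0 : 0 < σ) (c : EuclideanSpace ℝ (Fin N)) (R : ℝ) (hR : 0 < R) :
    ∫⁻ z in (ball c R)ᶜ, ENNReal.ofReal (1 / ‖c - z‖ ^ ((N:ℝ) + σ)) ≤
      kap N * ENNReal.ofReal (R ^ (-σ) / σ) := by
  have hmeas : Measurable fun r : ℝ ↦ ENNReal.ofReal (1 / r ^ ((N:ℝ) + σ)) := by
    apply Measurable.ennreal_ofReal
    exact Measurable.const_div (measurable_id.pow measurable_const) 1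
  have h1 : ∫⁻ z in (ball c R)ᶜ, ENNReal.ofReal (1 / ‖c - z‖ ^ ((N:ℝ) + σ)) =
      ∫⁻ z in (ball (0:EuclideanSpace ℝ (Fin N)) R)ᶜ,
        ENNReal.ofReal (1 / ‖z‖ ^ ((N:ℝ) + σ)) := by
    rw [← lintegral_indicator measurableSet_ball.compl,
      ← lintegral_indicator measurableSet_ball.compl]
    have h2 : ∀ z : EuclideanSpace ℝ (Fin N), ((ball c R)ᶜ).indicator
        (fun z ↦ ENNReal.ofReal (1 / ‖c - z‖ ^ ((N:ℝ) + σ))) z =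
        ((ball (0:EuclideanSpace ℝ (Fin N)) R)ᶜ).indicator
          (fun z ↦ ENNReal.ofReal (1 / ‖z‖ ^ ((N:ℝ) + σ))) (z - c) := by
      intro z
      have hmem : z ∈ (ball c R)ᶜ ↔ z - c ∈ (ball (0:EuclideanSpace ℝ (Fin N)) R)ᶜ := by
        simp [mem_ball, dist_eq_norm]
      by_cases hz : z ∈ (ball c R)ᶜ
      · rw [indicator_of_mem hz, indicator_of_mem (hmem.mp hz), norm_sub_rev]
      · rw [indicator_of_notMem hz, indicator_of_notMem (fun hc2 ↦ hz (hmem.mpr hc2))]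
    simp_rw [h2]
    exact lintegral_sub_right_eq_self _ c
  rw [h1, keyE_set hN (Iio R)ᶜ measurableSet_Iio.compl _ hmeas _ measurableSet_ball.compl
    (fun z ↦ by simp [mem_ball_zero_iff])]
  gcongr
  have hset : (Iio R)ᶜ ∩ Ioi (0:ℝ) = Ici R := by
    rw [compl_Iio]
    exact inter_eq_left.mpr fun x hx ↦ lt_of_lt_of_le hR hx
  rw [hset]
  have step1 : ∀ r ∈ Ici R, ENNReal.ofReal (r ^ (N - 1)) *
      ENNReal.ofReal (1 / r ^ ((N:ℝ) + σ)) ≤ ENNReal.ofReal (r ^ (-1 - σ)) := by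
    intro r hr
    have hr0 : (0:ℝ) < r := lt_of_lt_of_le hR hr
    rw [← ENNReal.ofReal_mul (pow_nonneg hr0.le _)]
    apply ENNReal.ofReal_le_ofReal
    rw [← Real.rpow_natCast r (N - 1), one_div, ← Real.rpow_neg hr0.le, ← Real.rpow_add hr0]
    apply le_of_eq
    congr 1
    have hc : ((N - 1 : ℕ) : ℝ) = (N:ℝ) - 1 := by
      have h5 : (1:ℕ) ≤ N := by omega
      push_cast [Nat.cast_sub h5]; ring
    rw [hc]; ring
  calc ∫⁻ r in Ici R, ENNReal.ofReal (r ^ (N - 1)) * ENNReal.ofReal (1 / r ^ ((N:ℝ) + σ))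
      ≤ ∫⁻ r in Ici R, ENNReal.ofReal (r ^ (-1 - σ)) :=
        setLIntegral_mono' measurableSet_Ici step1
    _ = ∫⁻ r in Ioi R, ENNReal.ofReal (r ^ (-1 - σ)) := by
        rw [← Measure.restrict_congr_set Ioi_ae_eq_Ici]
    _ = ENNReal.ofReal (∫ r in Ioi R, r ^ (-1 - σ)) := by
        rw [ofReal_integral_eq_lintegral_ofReal
          (integrableOn_Ioi_rpow_of_lt (by linarith) hR)]
        filter_upwards [ae_restrict_mem measurableSet_Ioi] with r hr
        exact Real.rpow_nonneg (le_of_lt (lt_trans hR hr)) _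
    _ = ENNReal.ofReal (R ^ (-σ) / σ) := by
        rw [integral_Ioi_rpow_of_lt (by linarith) hR]
        congr 1
        have h6 : (-1 - σ) + 1 = -σ := by ring
        rw [h6, neg_div, ← div_neg]
        congr 1
        ring

set_option maxHeartbeats 1000000 in
lemma main_bound (σ : ℝ) (hσ0 : 0 < σ) (hσ : σ < (N:ℝ) - 2) :
    ∃ C > 0, ∀ y : EuclideanSpace ℝ (Fin N),
      ∫⁻ z : EuclideanSpace ℝ (Fin N), ENNReal.ofReal
          (1 / ‖y - z‖ ^ ((N:ℝ) - 2) * (1 / (1 + ‖z‖) ^ (2 + σ))) ≤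
        ENNReal.ofReal (C / (1 + ‖y‖) ^ σ) := by
  have hN3 : (3:ℝ) ≤ (N:ℝ) := by exact_mod_cast hN
  have hNσ : (0:ℝ) < (N:ℝ) - 2 - σ := by linarith
  set k : ℝ := (kap N).toReal with hkdef
  have hk0 : 0 ≤ k := ENNReal.toReal_nonneg
  have hκk : kap N = ENNReal.ofReal k := (ENNReal.ofReal_toReal (kappa_ne_top hN)).symm
  have hpos1 : (0:ℝ) < 2 ^ (-σ) / σ := div_pos (Real.rpow_pos_of_pos two_pos _) hσ0
  set M1 : ℝ := 4 + 2 ^ (-σ) / σ with hM1def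
  set cB : ℝ := 2 ^ ((N:ℝ) - 2) * 3 ^ ((N:ℝ) - 2 - σ) / ((N:ℝ) - 2 - σ) with hcBdef
  set cC : ℝ := 2 ^ ((N:ℝ) - 2) / σ with hcCdef
  set M2 : ℝ := 2 ^ σ + cB + cC with hM2def
  have h2σ : (0:ℝ) < 2 ^ σ := Real.rpow_pos_of_pos two_pos _
  have hM1 : 0 < M1 := by simp only [hM1def]; linarith
  have hcB : 0 < cB := by
    simp only [hcBdef]
    exact div_pos (mul_pos (Real.rpow_pos_of_pos two_pos _)
      (Real.rpow_pos_of_pos (by norm_num) _)) hNσ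
  have hcC : 0 < cC := div_pos (Real.rpow_pos_of_pos two_pos _) hσ0
  have hM2 : 0 < M2 := by simp only [hM2def]; linarith
  refine ⟨(k + 1) * 2 ^ σ * (M1 + M2),
    mul_pos (mul_pos (by linarith) h2σ) (by linarith), fun y ↦ ?_⟩
  set C : ℝ := (k + 1) * 2 ^ σ * (M1 + M2) with hCdef
  set t : ℝ := ‖y‖ with htdef
  have ht0 : 0 ≤ t := norm_nonneg y
  have h1t : (0:ℝ) < 1 + t := by linarith
  set F : EuclideanSpace ℝ (Fin N) → ℝ≥0∞ := fun z ↦ ENNReal.ofReal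
    (1 / ‖y - z‖ ^ ((N:ℝ) - 2) * (1 / (1 + ‖z‖) ^ (2 + σ))) with hFdef
  show ∫⁻ z : EuclideanSpace ℝ (Fin N), F z ≤ ENNReal.ofReal (C / (1 + t) ^ σ)
  by_cases hcase : t ≤ 1
  · -- small y
    have hsplit : ∫⁻ z : EuclideanSpace ℝ (Fin N), F z =
        (∫⁻ z in ball y 2, F z) + ∫⁻ z in (ball y 2)ᶜ, F z :=
      (lintegral_add_compl F measurableSet_ball).symm
    have hA : ∫⁻ z in ball y 2, F z ≤ kap N * ENNReal.ofReal (2 * 2) := by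
      refine le_trans (setLIntegral_mono' measurableSet_ball fun z _ ↦ ?_)
        (ball_est hN y 2 (by norm_num))
      apply ENNReal.ofReal_le_ofReal
      have hb : 1 / (1 + ‖z‖) ^ (2 + σ) ≤ 1 := by
        apply div_le_one_of_le₀ ?_ (by positivity)
        apply Real.one_le_rpow (by linarith [norm_nonneg z]) (by linarith)
      calc 1 / ‖y - z‖ ^ ((N:ℝ) - 2) * (1 / (1 + ‖z‖) ^ (2 + σ))
          ≤ 1 / ‖y - z‖ ^ ((N:ℝ) - 2) * 1 :=
            mul_le_mul_of_nonneg_left hb (by positivity)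
        _ = 1 / ‖y - z‖ ^ ((N:ℝ) - 2) := mul_one _
    have hB : ∫⁻ z in (ball y 2)ᶜ, F z ≤ kap N * ENNReal.ofReal (2 ^ (-σ) / σ) := by
      refine le_trans (setLIntegral_mono' measurableSet_ball.compl fun z hz ↦ ?_)
        (tail_est hN σ hσ0 y 2 (by norm_num))
      apply ENNReal.ofReal_le_ofReal
      have hd2 : (2:ℝ) ≤ ‖y - z‖ := by
        have hz2 := hz
        simp only [mem_compl_iff, mem_ball, not_lt, dist_eq_norm] at hz2
        rwa [norm_sub_rev]
      have hdpos : (0:ℝ) < ‖y - z‖ := by linarith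
      have hz1 : ‖y - z‖ ≤ 1 + ‖z‖ := by
        have h1 : ‖y - z‖ - ‖z‖ ≤ ‖y‖ := by
          have h2 := norm_sub_norm_le (y - z) (-z)
          simp only [sub_neg_eq_add, sub_add_cancel, norm_neg] at h2
          linarith
        linarith
      calc 1 / ‖y - z‖ ^ ((N:ℝ) - 2) * (1 / (1 + ‖z‖) ^ (2 + σ))
          ≤ 1 / ‖y - z‖ ^ ((N:ℝ) - 2) * (1 / ‖y - z‖ ^ (2 + σ)) := by
            apply mul_le_mul_of_nonneg_left ?_ (by positivity)
            apply one_div_le_one_div_of_le (Real.rpow_pos_of_pos hdpos _)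
            exact Real.rpow_le_rpow hdpos.le hz1 (by linarith)
        _ = 1 / ‖y - z‖ ^ ((N:ℝ) + σ) := by
            rw [div_mul_div_comm, one_mul, ← Real.rpow_add hdpos]
            congr 1
            ring
    calc ∫⁻ z : EuclideanSpace ℝ (Fin N), F z
        ≤ kap N * ENNReal.ofReal (2 * 2) + kap N * ENNReal.ofReal (2 ^ (-σ) / σ) := by
          rw [hsplit]; exact add_le_add hA hB
      _ = ENNReal.ofReal (k * M1) := by
          rw [hκk, ← mul_add, ← ENNReal.ofReal_add (by norm_num) hpos1.le,
            ← ENNReal.ofReal_mul hk0]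
          norm_num [hM1def]
      _ ≤ ENNReal.ofReal (C / (1 + t) ^ σ) := by
          apply ENNReal.ofReal_le_ofReal
          rw [le_div_iff₀ (Real.rpow_pos_of_pos h1t σ)]
          have h2 : (1 + t) ^ σ ≤ 2 ^ σ := Real.rpow_le_rpow (by linarith) (by linarith) hσ0.le
          have h3 : k * M1 * (1 + t) ^ σ ≤ k * M1 * 2 ^ σ :=
            mul_le_mul_of_nonneg_left h2 (mul_nonneg hk0 hM1.le)
          have h4 : k * M1 * 2 ^ σ ≤ C := by
            rw [hCdef]
            nlinarith [mul_nonneg (mul_nonneg hk0 hM2.le) h2σ.le,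
              mul_pos (mul_pos hM1 h2σ) hM2, mul_pos hM1 h2σ, mul_pos hM2 h2σ]
          linarith
  · -- large y
    push_neg at hcase
    have htpos : (0:ℝ) < t := by linarith
    have ht2 : (0:ℝ) < t / 2 := by linarith
    have h2t : (0:ℝ) < 2 * t := by linarith
    have htneg : (0:ℝ) ≤ t ^ (-σ) := Real.rpow_nonneg ht0 _
    -- Piece A
    have hA : ∫⁻ z in ball y (t/2), F z ≤ ENNReal.ofReal (k * (2 ^ σ * t ^ (-σ))) := by
      have hc1 : (0:ℝ) ≤ 1 / (t/2) ^ (2 + σ) :=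
        (one_div_pos.mpr (Real.rpow_pos_of_pos ht2 _)).le
      calc ∫⁻ z in ball y (t/2), F z
          ≤ ∫⁻ z in ball y (t/2), ENNReal.ofReal (1 / (t/2) ^ (2 + σ)) *
              ENNReal.ofReal (1 / ‖y - z‖ ^ ((N:ℝ) - 2)) := by
            refine setLIntegral_mono' measurableSet_ball fun z hz ↦ ?_
            rw [← ENNReal.ofReal_mul hc1]
            apply ENNReal.ofReal_le_ofReal
            have hz2 : t/2 ≤ ‖z‖ := by
              have h1 : ‖y - z‖ < t/2 := by
                rw [norm_sub_rev]
                simpa [mem_ball, dist_eq_norm] using hz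
              have h2 : t - ‖z‖ ≤ ‖y - z‖ := by
                have h3 := norm_sub_norm_le y z
                linarith
              linarith
            rw [mul_comm (1 / (t/2) ^ (2 + σ))]
            apply mul_le_mul_of_nonneg_left ?_ (by positivity)
            apply one_div_le_one_div_of_le (Real.rpow_pos_of_pos ht2 _)
            exact Real.rpow_le_rpow ht2.le (by linarith [norm_nonneg z]) (by linarith)
        _ = ENNReal.ofReal (1 / (t/2) ^ (2 + σ)) *
              ∫⁻ z in ball y (t/2), ENNReal.ofReal (1 / ‖y - z‖ ^ ((N:ℝ) - 2)) :=
            lintegral_const_mul' _ _ ENNReal.ofReal_ne_top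
        _ ≤ ENNReal.ofReal (1 / (t/2) ^ (2 + σ)) * (kap N * ENNReal.ofReal (t/2 * (t/2))) := by
            gcongr
            exact ball_est hN y (t/2) ht2.le
        _ ≤ ENNReal.ofReal (k * (2 ^ σ * t ^ (-σ))) := by
            rw [hκk, ← mul_assoc, ← ENNReal.ofReal_mul hc1,
              ← ENNReal.ofReal_mul (mul_nonneg hc1 hk0)]
            apply ENNReal.ofReal_le_ofReal
            have hval : 1 / (t/2) ^ (2 + σ) * (t/2 * (t/2)) = 2 ^ σ * t ^ (-σ) := by
              have h2 : t/2 * (t/2) = (t/2) ^ (2:ℝ) := by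
                rw [show (2:ℝ) = ((2:ℕ):ℝ) by norm_num, Real.rpow_natCast]
                ring
              rw [h2, one_div, ← Real.rpow_neg ht2.le, ← Real.rpow_add ht2,
                show -(2 + σ) + 2 = -σ by ring,
                Real.div_rpow ht0 (by norm_num : (0:ℝ) ≤ 2),
                Real.rpow_neg (by norm_num : (0:ℝ) ≤ 2), div_eq_mul_inv, inv_inv]
              ring
            rw [mul_comm (1 / (t/2) ^ (2 + σ)) k, mul_assoc, hval]
    -- split of complement
    have hsplit2 : ∫⁻ z in (ball y (t/2))ᶜ, F z ≤
        (∫⁻ z in (ball y (t/2))ᶜ ∩ ball (0:EuclideanSpace ℝ (Fin N)) (2*t), F z) +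
          ∫⁻ z in (ball (0:EuclideanSpace ℝ (Fin N)) (2*t))ᶜ, F z := by
      refine le_trans (lintegral_mono_set ?_) (lintegral_union_le _ _ _)
      intro z hz
      by_cases h : z ∈ ball (0:EuclideanSpace ℝ (Fin N)) (2*t)
      · exact Or.inl ⟨hz, h⟩
      · exact Or.inr h
    -- Piece B
    have hB : ∫⁻ z in (ball y (t/2))ᶜ ∩ ball (0:EuclideanSpace ℝ (Fin N)) (2*t), F z ≤
        ENNReal.ofReal (k * (cB * t ^ (-σ))) := by
      have hc2 : (0:ℝ) ≤ 1 / (t/2) ^ ((N:ℝ) - 2) :=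
        (one_div_pos.mpr (Real.rpow_pos_of_pos ht2 _)).le
      calc ∫⁻ z in (ball y (t/2))ᶜ ∩ ball (0:EuclideanSpace ℝ (Fin N)) (2*t), F z
          ≤ ∫⁻ z in (ball y (t/2))ᶜ ∩ ball (0:EuclideanSpace ℝ (Fin N)) (2*t),
              ENNReal.ofReal (1 / (t/2) ^ ((N:ℝ) - 2)) *
                ENNReal.ofReal (1 / (1 + ‖z‖) ^ (2 + σ)) := by
            refine setLIntegral_mono' (measurableSet_ball.compl.inter measurableSet_ball)
              fun z hz ↦ ?_
            rw [← ENNReal.ofReal_mul hc2]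
            apply ENNReal.ofReal_le_ofReal
            have hd : t/2 ≤ ‖y - z‖ := by
              have h1 := hz.1
              simp only [mem_compl_iff, mem_ball, not_lt, dist_eq_norm] at h1
              rwa [norm_sub_rev]
            apply mul_le_mul_of_nonneg_right ?_ (by positivity)
            apply one_div_le_one_div_of_le (Real.rpow_pos_of_pos ht2 _)
            exact Real.rpow_le_rpow ht2.le hd (by linarith)
        _ ≤ ∫⁻ z in ball (0:EuclideanSpace ℝ (Fin N)) (2*t),
              ENNReal.ofReal (1 / (t/2) ^ ((N:ℝ) - 2)) *
                ENNReal.ofReal (1 / (1 + ‖z‖) ^ (2 + σ)) :=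
            lintegral_mono_set inter_subset_right
        _ = ENNReal.ofReal (1 / (t/2) ^ ((N:ℝ) - 2)) *
              ∫⁻ z in ball (0:EuclideanSpace ℝ (Fin N)) (2*t),
                ENNReal.ofReal (1 / (1 + ‖z‖) ^ (2 + σ)) :=
            lintegral_const_mul' _ _ ENNReal.ofReal_ne_top
        _ ≤ ENNReal.ofReal (1 / (t/2) ^ ((N:ℝ) - 2)) * (kap N *
              ENNReal.ofReal ((1 + 2*t) ^ ((N:ℝ) - 2 - σ) / ((N:ℝ) - 2 - σ))) := by
            gcongr
            exact mid_est hN σ hσ (2*t) h2t.le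
        _ ≤ ENNReal.ofReal (k * (cB * t ^ (-σ))) := by
            rw [hκk, ← mul_assoc, ← ENNReal.ofReal_mul hc2,
              ← ENNReal.ofReal_mul (mul_nonneg hc2 hk0)]
            apply ENNReal.ofReal_le_ofReal
            have hkey : 1 / (t/2) ^ ((N:ℝ) - 2) *
                ((1 + 2*t) ^ ((N:ℝ) - 2 - σ) / ((N:ℝ) - 2 - σ)) ≤ cB * t ^ (-σ) := by
              have e1 : 1 / (t/2) ^ ((N:ℝ) - 2) = 2 ^ ((N:ℝ) - 2) * t ^ (-((N:ℝ) - 2)) := by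
                rw [Real.div_rpow ht0 (by norm_num : (0:ℝ) ≤ 2), one_div, inv_div,
                  div_eq_mul_inv, ← Real.rpow_neg ht0]
              have e2 : (1 + 2*t) ^ ((N:ℝ) - 2 - σ) ≤
                  3 ^ ((N:ℝ) - 2 - σ) * t ^ ((N:ℝ) - 2 - σ) := by
                rw [← Real.mul_rpow (by norm_num) ht0]
                exact Real.rpow_le_rpow (by linarith) (by linarith) hNσ.le
              have e3 : t ^ (-((N:ℝ) - 2)) * t ^ ((N:ℝ) - 2 - σ) = t ^ (-σ) := by
                rw [← Real.rpow_add htpos]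
                congr 1; ring
              calc 1 / (t/2) ^ ((N:ℝ) - 2) * ((1 + 2*t) ^ ((N:ℝ) - 2 - σ) / ((N:ℝ) - 2 - σ))
                  ≤ 2 ^ ((N:ℝ) - 2) * t ^ (-((N:ℝ) - 2)) *
                      ((3 ^ ((N:ℝ) - 2 - σ) * t ^ ((N:ℝ) - 2 - σ)) / ((N:ℝ) - 2 - σ)) := by
                    rw [e1]
                    apply mul_le_mul_of_nonneg_left ?_
                      (mul_nonneg (Real.rpow_nonneg (by norm_num) _) (Real.rpow_nonneg ht0 _))
                    exact (div_le_div_iff_of_pos_right hNσ).mpr e2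
                _ = 2 ^ ((N:ℝ) - 2) * 3 ^ ((N:ℝ) - 2 - σ) / ((N:ℝ) - 2 - σ) *
                      (t ^ (-((N:ℝ) - 2)) * t ^ ((N:ℝ) - 2 - σ)) := by ring
                _ = cB * t ^ (-σ) := by rw [e3, hcBdef]
            calc 1 / (t/2) ^ ((N:ℝ) - 2) * k *
                  ((1 + 2*t) ^ ((N:ℝ) - 2 - σ) / ((N:ℝ) - 2 - σ))
                = k * (1 / (t/2) ^ ((N:ℝ) - 2) *
                    ((1 + 2*t) ^ ((N:ℝ) - 2 - σ) / ((N:ℝ) - 2 - σ))) := by ring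
              _ ≤ k * (cB * t ^ (-σ)) := mul_le_mul_of_nonneg_left hkey hk0
    -- Piece C
    have hC : ∫⁻ z in (ball (0:EuclideanSpace ℝ (Fin N)) (2*t))ᶜ, F z ≤
        ENNReal.ofReal (k * (cC * t ^ (-σ))) := by
      have hc3 : (0:ℝ) ≤ (2:ℝ) ^ ((N:ℝ) - 2) := (Real.rpow_pos_of_pos two_pos _).le
      calc ∫⁻ z in (ball (0:EuclideanSpace ℝ (Fin N)) (2*t))ᶜ, F z
          ≤ ∫⁻ z in (ball (0:EuclideanSpace ℝ (Fin N)) (2*t))ᶜ,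
              ENNReal.ofReal (2 ^ ((N:ℝ) - 2)) *
                ENNReal.ofReal (1 / ‖(0:EuclideanSpace ℝ (Fin N)) - z‖ ^ ((N:ℝ) + σ)) := by
            refine setLIntegral_mono' measurableSet_ball.compl fun z hz ↦ ?_
            rw [← ENNReal.ofReal_mul hc3]
            apply ENNReal.ofReal_le_ofReal
            rw [zero_sub, norm_neg]
            have hz2 : 2*t ≤ ‖z‖ := by
              have h1 := hz
              simp only [mem_compl_iff, mem_ball, dist_zero_right, not_lt] at h1
              exact h1
            have hzpos : (0:ℝ) < ‖z‖ := lt_of_lt_of_le h2t hz2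
            have hz20 : (0:ℝ) < ‖z‖ / 2 := by linarith
            have hyz : ‖z‖/2 ≤ ‖y - z‖ := by
              have h3 : ‖z‖ - ‖y‖ ≤ ‖z - y‖ := norm_sub_norm_le z y
              rw [norm_sub_rev]
              linarith
            have b1 : 1 / ‖y - z‖ ^ ((N:ℝ) - 2) ≤
                2 ^ ((N:ℝ) - 2) * (1 / ‖z‖ ^ ((N:ℝ) - 2)) := by
              have hb : (‖z‖/2) ^ ((N:ℝ) - 2) ≤ ‖y - z‖ ^ ((N:ℝ) - 2) :=
                Real.rpow_le_rpow hz20.le hyz (by linarith)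
              have e1 : 1 / (‖z‖/2) ^ ((N:ℝ) - 2) =
                  2 ^ ((N:ℝ) - 2) * (1 / ‖z‖ ^ ((N:ℝ) - 2)) := by
                rw [Real.div_rpow hzpos.le (by norm_num : (0:ℝ) ≤ 2), one_div, inv_div,
                  div_eq_mul_inv, one_div]
              calc 1 / ‖y - z‖ ^ ((N:ℝ) - 2)
                  ≤ 1 / (‖z‖/2) ^ ((N:ℝ) - 2) :=
                    one_div_le_one_div_of_le (Real.rpow_pos_of_pos hz20 _) hb
                _ = 2 ^ ((N:ℝ) - 2) * (1 / ‖z‖ ^ ((N:ℝ) - 2)) := e1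
            have b2 : 1 / (1 + ‖z‖) ^ (2 + σ) ≤ 1 / ‖z‖ ^ (2 + σ) := by
              apply one_div_le_one_div_of_le (Real.rpow_pos_of_pos hzpos _)
              exact Real.rpow_le_rpow hzpos.le (by linarith) (by linarith)
            calc 1 / ‖y - z‖ ^ ((N:ℝ) - 2) * (1 / (1 + ‖z‖) ^ (2 + σ))
                ≤ 2 ^ ((N:ℝ) - 2) * (1 / ‖z‖ ^ ((N:ℝ) - 2)) * (1 / ‖z‖ ^ (2 + σ)) :=
                  mul_le_mul b1 b2 (by positivity) (by positivity)
              _ = 2 ^ ((N:ℝ) - 2) * (1 / ‖z‖ ^ ((N:ℝ) + σ)) := by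
                  rw [mul_assoc, div_mul_div_comm, one_mul, ← Real.rpow_add hzpos,
                    show ((N:ℝ) - 2) + (2 + σ) = (N:ℝ) + σ by ring]
        _ = ENNReal.ofReal (2 ^ ((N:ℝ) - 2)) *
              ∫⁻ z in (ball (0:EuclideanSpace ℝ (Fin N)) (2*t))ᶜ,
                ENNReal.ofReal (1 / ‖(0:EuclideanSpace ℝ (Fin N)) - z‖ ^ ((N:ℝ) + σ)) :=
            lintegral_const_mul' _ _ ENNReal.ofReal_ne_top
        _ ≤ ENNReal.ofReal (2 ^ ((N:ℝ) - 2)) * (kap N * ENNReal.ofReal ((2*t) ^ (-σ) / σ)) := by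
            gcongr
            exact tail_est hN σ hσ0 0 (2*t) h2t
        _ ≤ ENNReal.ofReal (k * (cC * t ^ (-σ))) := by
            rw [hκk, ← mul_assoc, ← ENNReal.ofReal_mul hc3,
              ← ENNReal.ofReal_mul (mul_nonneg hc3 hk0)]
            apply ENNReal.ofReal_le_ofReal
            have h2ts : (2*t) ^ (-σ) ≤ t ^ (-σ) := by
              rw [Real.rpow_neg h2t.le, Real.rpow_neg ht0]
              exact inv_anti₀ (Real.rpow_pos_of_pos htpos σ)
                (Real.rpow_le_rpow ht0 (by linarith) hσ0.le)
            calc 2 ^ ((N:ℝ) - 2) * k * ((2*t) ^ (-σ) / σ)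
                ≤ 2 ^ ((N:ℝ) - 2) * k * (t ^ (-σ) / σ) := by
                  apply mul_le_mul_of_nonneg_left ?_ (mul_nonneg hc3 hk0)
                  exact (div_le_div_iff_of_pos_right hσ0).mpr h2ts
              _ = k * (cC * t ^ (-σ)) := by rw [hcCdef]; ring
    -- combine
    calc ∫⁻ z : EuclideanSpace ℝ (Fin N), F z
        = (∫⁻ z in ball y (t/2), F z) + ∫⁻ z in (ball y (t/2))ᶜ, F z :=
          (lintegral_add_compl F measurableSet_ball).symm
      _ ≤ ENNReal.ofReal (k * (2 ^ σ * t ^ (-σ))) +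
            (ENNReal.ofReal (k * (cB * t ^ (-σ))) + ENNReal.ofReal (k * (cC * t ^ (-σ)))) :=
          add_le_add hA (le_trans hsplit2 (add_le_add hB hC))
      _ = ENNReal.ofReal (k * (M2 * t ^ (-σ))) := by
          rw [← ENNReal.ofReal_add (mul_nonneg hk0 (mul_nonneg hcB.le htneg))
              (mul_nonneg hk0 (mul_nonneg hcC.le htneg)),
            ← ENNReal.ofReal_add (mul_nonneg hk0 (mul_nonneg h2σ.le htneg))
              (add_nonneg (mul_nonneg hk0 (mul_nonneg hcB.le htneg))
                (mul_nonneg hk0 (mul_nonneg hcC.le htneg)))]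
          congr 1
          first
          | (simp only [hM2def]; ring)
          | simp only [hM2def]
          | ring
      _ ≤ ENNReal.ofReal (C / (1 + t) ^ σ) := by
          apply ENNReal.ofReal_le_ofReal
          rw [le_div_iff₀ (Real.rpow_pos_of_pos h1t σ)]
          have hle : (1 + t) ^ σ ≤ 2 ^ σ * t ^ σ := by
            rw [← Real.mul_rpow (by norm_num : (0:ℝ) ≤ 2) ht0]
            exact Real.rpow_le_rpow h1t.le (by linarith) hσ0.le
          have htt : t ^ (-σ) * t ^ σ = 1 := by
            rw [← Real.rpow_add htpos, neg_add_cancel, Real.rpow_zero]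
          calc k * (M2 * t ^ (-σ)) * (1 + t) ^ σ
              ≤ k * (M2 * t ^ (-σ)) * (2 ^ σ * t ^ σ) :=
                mul_le_mul_of_nonneg_left hle
                  (mul_nonneg hk0 (mul_nonneg hM2.le htneg))
            _ = k * M2 * 2 ^ σ * (t ^ (-σ) * t ^ σ) := by ring
            _ = k * M2 * 2 ^ σ := by rw [htt, mul_one]
            _ ≤ C := by
                rw [hCdef]
                nlinarith [mul_nonneg (mul_nonneg hk0 hM1.le) h2σ.le,
                  mul_pos hM1 h2σ, mul_pos hM2 h2σ]

end Euclid

end RieszAux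

theorem stmt_1 (N : ℕ) (hN : 3 ≤ N) (σ : ℝ) (hσ0 : 0 < σ) (hσ : σ < (N : ℝ) - 2) :
    ∃ C > 0, ∀ y : EuclideanSpace ℝ (Fin N),
      ∫ z : EuclideanSpace ℝ (Fin N),
          1 / ‖y - z‖ ^ ((N : ℝ) - 2) * (1 / (1 + ‖z‖) ^ (2 + σ)) ≤
        C / (1 + ‖y‖) ^ σ := by
  obtain ⟨C, hC, hbound⟩ := RieszAux.main_bound hN σ hσ0 hσ
  refine ⟨C, hC, fun y ↦ ?_⟩
  have hden : (0:ℝ) < (1 + ‖y‖) ^ σ := Real.rpow_pos_of_pos (by positivity) σ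
  set f : EuclideanSpace ℝ (Fin N) → ℝ :=
    fun z ↦ 1 / ‖y - z‖ ^ ((N:ℝ) - 2) * (1 / (1 + ‖z‖) ^ (2 + σ)) with hfdef
  have hf0 : ∀ z, 0 ≤ f z := fun z ↦ by
    simp only [hfdef]
    positivity
  by_cases hint : Integrable f
  · rw [show (∫ z : EuclideanSpace ℝ (Fin N),
        1 / ‖y - z‖ ^ ((N:ℝ) - 2) * (1 / (1 + ‖z‖) ^ (2 + σ))) = ∫ z, f z from rfl,
      MeasureTheory.integral_eq_lintegral_of_nonneg_ae (Filter.Eventually.of_forall hf0)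
        hint.aestronglyMeasurable]
    exact ENNReal.toReal_le_of_le_ofReal (div_nonneg hC.le hden.le) (hbound y)
  · rw [show (∫ z : EuclideanSpace ℝ (Fin N),
        1 / ‖y - z‖ ^ ((N:ℝ) - 2) * (1 / (1 + ‖z‖) ^ (2 + σ))) = ∫ z, f z from rfl,
      MeasureTheory.integral_undef hint]
    exact div_nonneg hC.le hden.le
end

section
/- Let $N \geq 3$ and $\tau > 1$. Let $x_1, \dots, x_k$ be points in $\mathbb{R}^N$ with pairwise distances $|x_i - x_j| \geq d$ for $i \neq j$, where $d \geq 1$, and suppose $\sum_{j=2}^k |x_j - x_1|^{-\tau} \leq 1$ (as holds in the paper's configuration). Then there is a constant $C$ depending only on $N, \tau$ such that for all $y \in \mathbb{R}^N$: $\left(\sum_{j=1}^k \frac{1}{(1+|y-x_j|)^{\frac{N+2}{2}+\tau}}\right)\left(\sum_{i=1}^k \frac{1}{(1+|y-x_i|)^{\frac{N-2}{2}+\tau}}\right) \leq C \sum_{j=1}^k \frac{1}{(1+|y-x_j|)^{N+\tau}}$. -/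
open Real Finset

private lemma aux_half (u v r a b τ : ℝ) (hu : 1 ≤ u) (hv : 1 ≤ v) (hr : 0 < r)
    (hruv : r ≤ u + v) (hτ : 0 < τ) (hb : τ ≤ b) (hle : u ≤ v) :
    1 / u ^ a * (1 / v ^ b) ≤ 2 ^ τ / r ^ τ * (1 / u ^ (a + b - τ)) := by
  have hu0 : (0:ℝ) < u := one_pos.trans_le hu
  have hv0 : (0:ℝ) < v := one_pos.trans_le hv
  have h1 : u ^ (a + b - τ) = u ^ a * u ^ (b - τ) := by
    rw [show a + b - τ = a + (b - τ) by ring, Real.rpow_add hu0]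
  have h2 : u ^ (b - τ) ≤ v ^ (b - τ) := Real.rpow_le_rpow hu0.le hle (by linarith)
  have h3 : r ^ τ ≤ 2 ^ τ * v ^ τ := by
    calc r ^ τ ≤ (2 * v) ^ τ := Real.rpow_le_rpow hr.le (by linarith) hτ.le
      _ = 2 ^ τ * v ^ τ := Real.mul_rpow (by norm_num) hv0.le
  have h4 : v ^ τ * v ^ (b - τ) = v ^ b := by
    rw [← Real.rpow_add hv0]; ring_nf
  have hua : (0:ℝ) < u ^ a := Real.rpow_pos_of_pos hu0 a
  have hvb : (0:ℝ) < v ^ b := Real.rpow_pos_of_pos hv0 b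
  have hrt : (0:ℝ) < r ^ τ := Real.rpow_pos_of_pos hr τ
  have hus : (0:ℝ) < u ^ (a + b - τ) := Real.rpow_pos_of_pos hu0 _
  have key : r ^ τ * u ^ (a + b - τ) ≤ 2 ^ τ * (u ^ a * v ^ b) := by
    calc r ^ τ * u ^ (a + b - τ) = r ^ τ * (u ^ a * u ^ (b - τ)) := by rw [h1]
      _ ≤ (2 ^ τ * v ^ τ) * (u ^ a * v ^ (b - τ)) := by
          apply mul_le_mul h3 (mul_le_mul_of_nonneg_left h2 hua.le) (by positivity) (by positivity)
      _ = 2 ^ τ * (u ^ a * (v ^ τ * v ^ (b - τ))) := by ring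
      _ = 2 ^ τ * (u ^ a * v ^ b) := by rw [h4]
  rw [div_mul_div_comm, one_mul, div_mul_div_comm, mul_one,
    div_le_div_iff₀ (by positivity) (by positivity)]
  nlinarith [key]

private lemma aux_prod (u v r a b τ : ℝ) (hu : 1 ≤ u) (hv : 1 ≤ v) (hr : 0 < r)
    (hruv : r ≤ u + v) (hτ : 0 < τ) (ha : τ ≤ a) (hb : τ ≤ b) :
    1 / u ^ a * (1 / v ^ b) ≤
      2 ^ τ / r ^ τ * (1 / u ^ (a + b - τ)) + 2 ^ τ / r ^ τ * (1 / v ^ (a + b - τ)) := by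
  rcases le_total u v with h | h
  · have := aux_half u v r a b τ hu hv hr hruv hτ hb h
    have hpos : (0:ℝ) ≤ 2 ^ τ / r ^ τ * (1 / v ^ (a + b - τ)) := by positivity
    linarith
  · have := aux_half v u r b a τ hv hu hr (by linarith) hτ ha h
    have hpos : (0:ℝ) ≤ 2 ^ τ / r ^ τ * (1 / u ^ (a + b - τ)) := by positivity
    rw [mul_comm (1 / u ^ a)]
    rw [show b + a - τ = a + b - τ by ring] at this
    linarith

theorem stmt_10 (N : ℕ) (hN : 3 ≤ N) (τ : ℝ) (hτ : 1 < τ) :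
    ∃ C > (0 : ℝ),
      ∀ (k : ℕ) (x : Fin k → EuclideanSpace ℝ (Fin N)) (d : ℝ), 1 ≤ d →
        (∀ i j, i ≠ j → d ≤ ‖x i - x j‖) →
        (∀ j₀ : Fin k, (∑ j ∈ Finset.univ.erase j₀, 1 / ‖x j - x j₀‖ ^ τ) ≤ 1) →
        ∀ y : EuclideanSpace ℝ (Fin N),
          (∑ j : Fin k, 1 / (1 + ‖y - x j‖) ^ (((N : ℝ) + 2) / 2 + τ)) *
            (∑ i : Fin k, 1 / (1 + ‖y - x i‖) ^ (((N : ℝ) - 2) / 2 + τ)) ≤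
          C * ∑ j : Fin k, 1 / (1 + ‖y - x j‖) ^ ((N : ℝ) + τ) := by
  have hτ0 : (0:ℝ) < τ := by linarith
  refine ⟨1 + 2 * 2 ^ τ, by positivity, ?_⟩
  intro k x d hd hsep hsum y
  set a : ℝ := ((N : ℝ) + 2) / 2 + τ with ha_def
  set b : ℝ := ((N : ℝ) - 2) / 2 + τ with hb_def
  have hN3 : (3:ℝ) ≤ (N:ℝ) := by exact_mod_cast hN
  have hab : a + b - τ = (N:ℝ) + τ := by rw [ha_def, hb_def]; ring
  have hta : τ ≤ a := by rw [ha_def]; linarith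
  have htb : τ ≤ b := by rw [hb_def]; linarith
  set u : Fin k → ℝ := fun j => 1 + ‖y - x j‖ with hu_def
  have hu : ∀ j, 1 ≤ u j := fun j => by
    have := norm_nonneg (y - x j); simp only [hu_def]; linarith
  have hu0 : ∀ j, (0:ℝ) < u j := fun j => one_pos.trans_le (hu j)
  set s : ℝ := (N:ℝ) + τ with hs_def
  have hr : ∀ i j : Fin k, i ≠ j → (0:ℝ) < ‖x i - x j‖ :=
    fun i j hij => lt_of_lt_of_le (by linarith) (hsep i j hij)
  have hruv : ∀ i j : Fin k, ‖x i - x j‖ ≤ u j + u i := by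
    intro i j
    have h := norm_sub_le (y - x j) (y - x i)
    have hxy : x i - x j = (y - x j) - (y - x i) := by abel
    rw [hxy]
    simp only [hu_def]
    linarith [h]
  have hpt : ∀ j : Fin k, ∀ i ∈ Finset.univ.erase j,
      1 / u j ^ a * (1 / u i ^ b) ≤
        2 ^ τ / ‖x i - x j‖ ^ τ * (1 / u j ^ s) + 2 ^ τ / ‖x i - x j‖ ^ τ * (1 / u i ^ s) := by
    intro j i hi
    have hij : i ≠ j := (Finset.mem_erase.mp hi).1
    have h := aux_prod (u j) (u i) (‖x i - x j‖) a b τ (hu j) (hu i) (hr i j hij)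
      (hruv i j) hτ0 hta htb
    rwa [hab] at h
  rw [Finset.sum_mul_sum]
  have hT2 : ∀ j : Fin k,
      (∑ i ∈ Finset.univ.erase j, 2 ^ τ / ‖x i - x j‖ ^ τ * (1 / u j ^ s)) ≤
        2 ^ τ * (1 / u j ^ s) := by
    intro j
    have he : ∀ i ∈ Finset.univ.erase j,
        2 ^ τ / ‖x i - x j‖ ^ τ * (1 / u j ^ s) =
          (2 ^ τ * (1 / u j ^ s)) * (1 / ‖x i - x j‖ ^ τ) := by
      intro i _; ring
    rw [Finset.sum_congr rfl he, ← Finset.mul_sum]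
    calc (2 ^ τ * (1 / u j ^ s)) * ∑ i ∈ Finset.univ.erase j, 1 / ‖x i - x j‖ ^ τ
        ≤ (2 ^ τ * (1 / u j ^ s)) * 1 :=
          mul_le_mul_of_nonneg_left (hsum j) (by positivity)
      _ = 2 ^ τ * (1 / u j ^ s) := mul_one _
  have hswap : (∑ j : Fin k, ∑ i ∈ Finset.univ.erase j, 2 ^ τ / ‖x i - x j‖ ^ τ * (1 / u i ^ s))
      = ∑ i : Fin k, ∑ j ∈ Finset.univ.erase i, 2 ^ τ / ‖x i - x j‖ ^ τ * (1 / u i ^ s) := by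
    apply Finset.sum_comm'
    intro j i
    simp [ne_comm, eq_comm]
  have hT3 : ∀ i : Fin k,
      (∑ j ∈ Finset.univ.erase i, 2 ^ τ / ‖x i - x j‖ ^ τ * (1 / u i ^ s)) ≤
        2 ^ τ * (1 / u i ^ s) := by
    intro i
    have he : ∀ j ∈ Finset.univ.erase i,
        2 ^ τ / ‖x i - x j‖ ^ τ * (1 / u i ^ s) =
          (2 ^ τ * (1 / u i ^ s)) * (1 / ‖x j - x i‖ ^ τ) := by
      intro j _; rw [norm_sub_rev]; ring
    rw [Finset.sum_congr rfl he, ← Finset.mul_sum]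
    calc (2 ^ τ * (1 / u i ^ s)) * ∑ j ∈ Finset.univ.erase i, 1 / ‖x j - x i‖ ^ τ
        ≤ (2 ^ τ * (1 / u i ^ s)) * 1 :=
          mul_le_mul_of_nonneg_left (hsum i) (by positivity)
      _ = 2 ^ τ * (1 / u i ^ s) := mul_one _
  have hdiag : ∀ j : Fin k, 1 / u j ^ a * (1 / u j ^ b) ≤ 1 / u j ^ s := by
    intro j
    have h1 : u j ^ a * u j ^ b = u j ^ (a + b) := (Real.rpow_add (hu0 j) a b).symm
    have h2 : u j ^ s ≤ u j ^ (a + b) :=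
      Real.rpow_le_rpow_of_exponent_le (hu j) (by linarith [hab])
    rw [div_mul_div_comm, one_mul, h1]
    exact div_le_div_of_nonneg_left one_pos.le (Real.rpow_pos_of_pos (hu0 j) _) h2
  calc (∑ j : Fin k, ∑ i : Fin k, 1 / u j ^ a * (1 / u i ^ b))
      ≤ ∑ j : Fin k, (1 / u j ^ s
          + ((∑ i ∈ Finset.univ.erase j, 2 ^ τ / ‖x i - x j‖ ^ τ * (1 / u j ^ s))
          + (∑ i ∈ Finset.univ.erase j, 2 ^ τ / ‖x i - x j‖ ^ τ * (1 / u i ^ s)))) := by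
        apply Finset.sum_le_sum
        intro j _
        rw [← Finset.add_sum_erase Finset.univ (fun i => 1 / u j ^ a * (1 / u i ^ b))
          (Finset.mem_univ j)]
        refine add_le_add (hdiag j) ?_
        rw [← Finset.sum_add_distrib]
        exact Finset.sum_le_sum (hpt j)
    _ = (∑ j : Fin k, 1 / u j ^ s)
        + ((∑ j : Fin k, ∑ i ∈ Finset.univ.erase j, 2 ^ τ / ‖x i - x j‖ ^ τ * (1 / u j ^ s))
        + (∑ j : Fin k, ∑ i ∈ Finset.univ.erase j, 2 ^ τ / ‖x i - x j‖ ^ τ * (1 / u i ^ s))) := by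
        rw [Finset.sum_add_distrib, Finset.sum_add_distrib]
    _ ≤ (∑ j : Fin k, 1 / u j ^ s)
        + ((∑ j : Fin k, 2 ^ τ * (1 / u j ^ s)) + (∑ i : Fin k, 2 ^ τ * (1 / u i ^ s))) := by
        refine add_le_add_right (add_le_add ?_ ?_) _
        · exact Finset.sum_le_sum fun j _ => hT2 j
        · rw [hswap]; exact Finset.sum_le_sum fun i _ => hT3 i
    _ = (1 + 2 * 2 ^ τ) * ∑ j : Fin k, 1 / u j ^ s := by
        rw [← Finset.mul_sum]; ring
end

section
/- Let $N \geq 3$, $\tau > 0$, and let $x_1, \dots, x_k$ be $k$ equally spaced points on a circle of radius $r$ in $\mathbb{R}^2 \times \{0\} \subset \mathbb{R}^N$ with $k/r \leq 1$. Suppose $\bar\eta \in (0, 2\tau)$ satisfies $\tau - \bar\eta/2 > 1$. Then there is a constant $C = C(N, \tau, \bar\eta)$ such that for all $y$ in the sector $\Omega_1$ (i.e. $|y - x_1| \leq |y - x_j|$ for all $j$): $\sum_{j=2}^{k} \frac{1}{(1 + |y - x_j|)^{\frac{N-2}{2} + \tau}} \leq \frac{C}{(1 + |y - x_1|)^{\frac{N-2}{2}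 + \frac{\bar\eta}{2}}}$. -/
open Real Finset

/-- `k` equally spaced points on the circle of radius `r` in the first two
coordinates of `ℝ^N` (indexed by `j = 1, ..., k`). -/
noncomputable def circlePoint (N k : ℕ) (r : ℝ) (j : ℕ) : EuclideanSpace ℝ (Fin N) :=
  WithLp.toLp 2 (fun i : Fin N =>
    if (i : ℕ) = 0 then r * Real.cos (2 * ((j : ℝ) - 1) * π / k)
    else if (i : ℕ) = 1 then r * Real.sin (2 * ((j : ℝ) - 1) * π / k)
    else 0)

lemma circlePoint_norm_sub (N k : ℕ) (hN : 3 ≤ N) (r : ℝ) (hr : 0 ≤ r) (j : ℕ) :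
    ‖circlePoint N k r j - circlePoint N k r 1‖
      = 2 * r * |Real.sin (((j : ℝ) - 1) * π / k)| := by
  have h0 : (0 : ℕ) < N := by omega
  have h1 : (1 : ℕ) < N := by omega
  have hθ : 2 * ((j : ℝ) - 1) * π / k = 2 * (((j : ℝ) - 1) * π / k) := by ring
  rw [EuclideanSpace.norm_eq]
  have hne : (⟨0, h0⟩ : Fin N) ≠ ⟨1, h1⟩ := by simp
  have hsum : ∑ i : Fin N, ‖(circlePoint N k r j - circlePoint N k r 1) i‖ ^ 2
      = (2 * r * Real.sin (((j : ℝ) - 1) * π / k)) ^ 2 := by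
    rw [← Finset.sum_subset (Finset.subset_univ ({⟨0, h0⟩, ⟨1, h1⟩} : Finset (Fin N)))
      (fun i _ hi => ?_)]
    · rw [Finset.sum_pair hne]
      set φ : ℝ := ((j : ℝ) - 1) * π / k with hφ
      have e0 : (circlePoint N k r j - circlePoint N k r 1) (⟨0, h0⟩ : Fin N)
          = r * Real.cos (2 * φ) - r := by
        simp [circlePoint, PiLp.sub_apply, hθ]
      have e1 : (circlePoint N k r j - circlePoint N k r 1) (⟨1, h1⟩ : Fin N)
          = r * Real.sin (2 * φ) := by
        simp [circlePoint, PiLp.sub_apply, hθ]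
      rw [e0, e1, Real.norm_eq_abs, Real.norm_eq_abs, sq_abs, sq_abs]
      have hc : Real.cos (2 * φ) = 2 * Real.cos φ ^ 2 - 1 := Real.cos_two_mul φ
      have hs2 : Real.sin (2 * φ) ^ 2 = 1 - Real.cos (2 * φ) ^ 2 := Real.sin_sq (2 * φ)
      have hs : Real.sin φ ^ 2 + Real.cos φ ^ 2 = 1 := Real.sin_sq_add_cos_sq φ
      linear_combination r^2*hs2 - 2*r^2*hc - 4*r^2*hs
    · have hi0 : (i : ℕ) ≠ 0 := by
        intro h; exact hi (by simp [Finset.mem_insert, Fin.ext_iff, h])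
      have hi1 : (i : ℕ) ≠ 1 := by
        intro h; exact hi (by simp [Finset.mem_insert, Fin.ext_iff, h])
      simp [circlePoint, PiLp.sub_apply, hi0, hi1]
  rw [hsum, Real.sqrt_sq_eq_abs, abs_mul, abs_mul]
  simp [abs_of_nonneg hr]

set_option maxHeartbeats 1000000 in
theorem stmt_15 (N : ℕ) (hN : 3 ≤ N) (τ eta : ℝ) (hτ : 0 < τ)
    (heta0 : 0 < eta) (heta : eta < 2 * τ) (hτη : τ - eta / 2 > 1) :
    ∃ C > (0 : ℝ),
      ∀ (k : ℕ), 2 ≤ k → ∀ r : ℝ, 0 < r → (k : ℝ) / r ≤ 1 →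
        ∀ y : EuclideanSpace ℝ (Fin N),
          (∀ j, 2 ≤ j → j ≤ k → ‖y - circlePoint N k r 1‖ ≤ ‖y - circlePoint N k r j‖) →
          (∑ j ∈ Finset.Icc 2 k,
              1 / (1 + ‖y - circlePoint N k r j‖) ^ (((N : ℝ) - 2) / 2 + τ)) ≤
            C / (1 + ‖y - circlePoint N k r 1‖) ^ (((N : ℝ) - 2) / 2 + eta / 2) := by
  set b : ℝ := τ - eta / 2 with hbdef
  have hb1 : (1 : ℝ) < b := hτη
  have hb0 : (0 : ℝ) < b := by linarith
  set a : ℝ := ((N : ℝ) - 2) / 2 + eta / 2 with hadef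
  have hN3 : (3 : ℝ) ≤ (N : ℝ) := by exact_mod_cast hN
  have ha0 : (0 : ℝ) < a := by rw [hadef]; linarith
  have hab : ((N : ℝ) - 2) / 2 + τ = a + b := by rw [hadef, hbdef]; ring
  set g : ℕ → ℝ := fun n => 1 / (n : ℝ) ^ b with hgdef
  have hg0 : ∀ n, 0 ≤ g n := fun n => by rw [hgdef]; positivity
  have hS : Summable g := Real.summable_one_div_nat_rpow.mpr hb1
  set S : ℝ := ∑' n, g n with hSdef
  have hS1 : (1 : ℝ) ≤ S := by
    have h := Summable.le_tsum hS 1 (fun j _ => hg0 j)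
    have h1g : g 1 = 1 := by simp [hgdef, Real.one_rpow]
    rw [hSdef]
    linarith
  refine ⟨2 * S, by linarith, ?_⟩
  intro k hk r hr hkr y hy
  have hrk : (k : ℝ) ≤ r := (div_le_one hr).mp hkr
  have hkpos : (0 : ℝ) < (k : ℝ) := by
    have : (2 : ℝ) ≤ (k : ℝ) := by exact_mod_cast hk
    linarith
  set d1 : ℝ := ‖y - circlePoint N k r 1‖ with hd1
  have hd1nn : 0 ≤ d1 := norm_nonneg _
  have key : ∀ j ∈ Finset.Icc 2 k,
      1 / (1 + ‖y - circlePoint N k r j‖) ^ (a + b)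
        ≤ (1 / (1 + d1) ^ a) * (g (j - 1) + g (k + 1 - j)) := by
    intro j hj
    rw [Finset.mem_Icc] at hj
    obtain ⟨hj2, hjk⟩ := hj
    set dj : ℝ := ‖y - circlePoint N k r j‖ with hdj
    have hdjnn : 0 ≤ dj := norm_nonneg _
    have hd1dj : d1 ≤ dj := hy j hj2 hjk
    set φ : ℝ := ((j : ℝ) - 1) * π / k with hφ
    have hj1 : (1 : ℝ) ≤ (j : ℝ) - 1 := by
      have : (2 : ℝ) ≤ (j : ℝ) := by exact_mod_cast hj2
      linarith
    have hjk' : (j : ℝ) ≤ (k : ℝ) := by exact_mod_cast hjk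
    have hφpos : 0 < φ := by
      rw [hφ]; exact div_pos (mul_pos (by linarith) Real.pi_pos) hkpos
    have hφleπ : φ ≤ π := by
      rw [hφ, div_le_iff₀ hkpos]
      linarith [mul_le_mul_of_nonneg_left (show (j:ℝ) - 1 ≤ (k:ℝ) by linarith)
        Real.pi_pos.le]
    have hcast1 : ((j - 1 : ℕ) : ℝ) = (j : ℝ) - 1 := by
      have h := Nat.cast_sub (show 1 ≤ j by omega) (R := ℝ)
      simpa using h
    have hcast2 : ((k + 1 - j : ℕ) : ℝ) = (k : ℝ) + 1 - (j : ℝ) := by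
      have h := Nat.cast_sub (show j ≤ k + 1 by omega) (R := ℝ)
      push_cast at h
      linarith
    have h2pi : ∀ x : ℝ, 2 / π * (x * π / k) = 2 * x / k := by
      intro x
      field_simp
    obtain ⟨n, hn1, hgn, hsin⟩ : ∃ n : ℕ, 1 ≤ n ∧ g n ≤ g (j - 1) + g (k + 1 - j) ∧
        2 * (n : ℝ) / k ≤ Real.sin φ := by
      rcases le_or_gt (2 * (j - 1)) k with hcase | hcase
      · refine ⟨j - 1, by omega, le_add_of_nonneg_right (hg0 _), ?_⟩
        have hc : 2 * ((j : ℝ) - 1) ≤ (k : ℝ) := by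
          have h' := Nat.cast_le (α := ℝ).mpr hcase
          rw [Nat.cast_mul, hcast1] at h'
          simpa using h'
        have hφle : φ ≤ π / 2 := by
          rw [hφ, div_le_div_iff₀ hkpos (by norm_num : (0 : ℝ) < 2)]
          linarith [mul_le_mul_of_nonneg_left hc Real.pi_pos.le]
        have h := Real.mul_le_sin hφpos.le hφle
        rw [hcast1]
        calc 2 * ((j : ℝ) - 1) / k = 2 / π * φ := by rw [hφ, h2pi]
          _ ≤ Real.sin φ := h
      · refine ⟨k + 1 - j, by omega, le_add_of_nonneg_left (hg0 _), ?_⟩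
        have hc : (k : ℝ) ≤ 2 * ((j : ℝ) - 1) := by
          have h' := Nat.cast_le (α := ℝ).mpr hcase.le
          rw [Nat.cast_mul, hcast1] at h'
          simpa using h'
        have hπφ : π - φ = ((k : ℝ) + 1 - j) * π / k := by
          rw [hφ]; field_simp; ring
        have hφge : π / 2 ≤ φ := by
          rw [hφ, le_div_iff₀ hkpos]
          linarith [mul_le_mul_of_nonneg_left hc Real.pi_pos.le]
        have hle : π - φ ≤ π / 2 := by linarith
        have h := Real.mul_le_sin (by linarith : (0:ℝ) ≤ π - φ) hle
        rw [Real.sin_pi_sub] at h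
        rw [hcast2]
        calc 2 * ((k : ℝ) + 1 - j) / k = 2 / π * (((k : ℝ) + 1 - j) * π / k) := by
              rw [h2pi]
          _ = 2 / π * (π - φ) := by rw [hπφ]
          _ ≤ Real.sin φ := h
    have hn1' : (1 : ℝ) ≤ (n : ℝ) := by exact_mod_cast hn1
    -- distance lower bound
    have htri : 2 * r * Real.sin φ ≤ d1 + dj := by
      have h2 := norm_sub_le (y - circlePoint N k r 1) (y - circlePoint N k r j)
      rw [show (y - circlePoint N k r 1) - (y - circlePoint N k r j)
          = circlePoint N k r j - circlePoint N k r 1 by abel] at h2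
      rw [circlePoint_norm_sub N k hN r hr.le j, ← hφ,
        abs_of_nonneg (Real.sin_nonneg_of_nonneg_of_le_pi hφpos.le hφleπ)] at h2
      exact h2
    have hd2n : 2 * (n : ℝ) ≤ dj := by
      have h1 : 2 * r * (2 * (n : ℝ) / k) ≤ 2 * r * Real.sin φ :=
        mul_le_mul_of_nonneg_left hsin (by linarith)
      have hrkq : 1 ≤ r / (k : ℝ) := (one_le_div hkpos).mpr hrk
      have h2 : 4 * (n : ℝ) ≤ 2 * r * (2 * (n : ℝ) / k) := by
        rw [show 2 * r * (2 * (n : ℝ) / k) = 4 * (n : ℝ) * (r / k) by field_simp; ring]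
        linarith [mul_le_mul_of_nonneg_left hrkq
          (show (0:ℝ) ≤ 4 * (n : ℝ) by positivity)]
      linarith
    have hbase : (n : ℝ) ≤ 1 + dj := by linarith
    have hsplit : (1 + d1) ^ a * (n : ℝ) ^ b ≤ (1 + dj) ^ (a + b) := by
      rw [Real.rpow_add (by linarith : (0 : ℝ) < 1 + dj)]
      exact mul_le_mul (Real.rpow_le_rpow (by linarith) (by linarith) ha0.le)
        (Real.rpow_le_rpow (by exact_mod_cast Nat.zero_le n) hbase hb0.le)
        (le_of_lt (Real.rpow_pos_of_pos (lt_of_lt_of_le zero_lt_one hn1') b))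
        (Real.rpow_nonneg (by linarith) a)
    have hn0 : (0 : ℝ) < (n : ℝ) := by linarith
    have hP1 : (0 : ℝ) < (1 + d1) ^ a := Real.rpow_pos_of_pos (by linarith) a
    have hP2 : (0 : ℝ) < (n : ℝ) ^ b := Real.rpow_pos_of_pos hn0 b
    have hgn_eval : g n = 1 / (n : ℝ) ^ b := rfl
    calc 1 / (1 + dj) ^ (a + b) ≤ 1 / ((1 + d1) ^ a * (n : ℝ) ^ b) :=
          one_div_le_one_div_of_le (mul_pos hP1 hP2) hsplit
      _ = (1 / (1 + d1) ^ a) * g n := by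
          rw [hgn_eval, one_div_mul_one_div]
      _ ≤ (1 / (1 + d1) ^ a) * (g (j - 1) + g (k + 1 - j)) :=
          mul_le_mul_of_nonneg_left hgn (le_of_lt (one_div_pos.mpr hP1))
  have him1 : ∑ j ∈ Finset.Icc 2 k, g (j - 1) ≤ S := by
    have hinj : ∀ x ∈ Finset.Icc 2 k, ∀ y ∈ Finset.Icc 2 k, x - 1 = y - 1 → x = y := by
      intro x hx y' hy' h
      rw [Finset.mem_Icc] at hx hy'
      omega
    calc ∑ j ∈ Finset.Icc 2 k, g (j - 1)
        = ∑ i ∈ (Finset.Icc 2 k).image (fun x => x - 1), g i :=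
          (Finset.sum_image hinj).symm
      _ ≤ S := Summable.sum_le_tsum _ (fun i _ => hg0 i) hS
  have him2 : ∑ j ∈ Finset.Icc 2 k, g (k + 1 - j) ≤ S := by
    have hinj : ∀ x ∈ Finset.Icc 2 k, ∀ y ∈ Finset.Icc 2 k, k + 1 - x = k + 1 - y → x = y := by
      intro x hx y' hy' h
      rw [Finset.mem_Icc] at hx hy'
      omega
    calc ∑ j ∈ Finset.Icc 2 k, g (k + 1 - j)
        = ∑ i ∈ (Finset.Icc 2 k).image (fun x => k + 1 - x), g i :=
          (Finset.sum_image hinj).symm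
      _ ≤ S := Summable.sum_le_tsum _ (fun i _ => hg0 i) hS
  simp only [hab]
  calc ∑ j ∈ Finset.Icc 2 k, 1 / (1 + ‖y - circlePoint N k r j‖) ^ (a + b)
      ≤ ∑ j ∈ Finset.Icc 2 k, (1 / (1 + d1) ^ a) * (g (j - 1) + g (k + 1 - j)) :=
        Finset.sum_le_sum key
    _ = (1 / (1 + d1) ^ a) *
        ((∑ j ∈ Finset.Icc 2 k, g (j - 1)) + ∑ j ∈ Finset.Icc 2 k, g (k + 1 - j)) := by
        rw [← Finset.mul_sum, Finset.sum_add_distrib]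
    _ ≤ (1 / (1 + d1) ^ a) * (S + S) :=
        mul_le_mul_of_nonneg_left (add_le_add him1 him2)
          (le_of_lt (one_div_pos.mpr (Real.rpow_pos_of_pos (by linarith) a)))
    _ = 2 * S / (1 + d1) ^ a := by ring
end
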